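/- arXiv:2103.06502 — 3 statements merged into one kernel-verified Lean document; each statement's English description precedes it below -/
import Mathlib

section
/- Suppose for every fixed x ∈ 𝕏 the map u ↦ ∫ f(z) 𝒯(dz|x,u) is continuous for every bounded Borel measurable f : 𝕏 → ℝ (strong continuity in actions). If μ_n → μ in the w-s topology on 𝒫(𝕏×𝔸) (i.e., ∫ g dμ_n → ∫ g dμ for every bounded measurable g(x,u) continuous in u for each fixed x) and sup_{A Borel} |μ_n(A×𝔸) − (μ_n𝒯)(A)| → 0, then μ ∈ 𝒢. -/
open MeasureTheory ProbabilityTheory Filter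
open scoped ENNReal Topology

/-- Under strong continuity of the kernel in the action variable for each fixed
state, a `w-s` limit of probability measures whose invariance defect vanishes
uniformly over Borel sets is an invariant occupation measure. -/
theorem stmt8 {X A : Type*}
    [TopologicalSpace X] [MeasurableSpace X] [OpensMeasurableSpace X]
    [TopologicalSpace A] [MeasurableSpace A] [OpensMeasurableSpace A]
    (T : Kernel (X × A) X) [IsMarkovKernel T]
    (hT : ∀ f : X → ℝ, Measurable f → (∃ M : ℝ, ∀ x, |f x| ≤ M) →
      ∀ x : X, Continuous fun u : A => ∫ y, f y ∂(T (x, u)))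
    (μseq : ℕ → Measure (X × A)) (hμseq : ∀ n, IsProbabilityMeasure (μseq n))
    (μ : Measure (X × A)) [IsProbabilityMeasure μ]
    (hws : ∀ g : X × A → ℝ, Measurable g → (∃ M : ℝ, ∀ p, |g p| ≤ M) →
      (∀ x : X, Continuous fun u : A => g (x, u)) →
      Tendsto (fun n => ∫ p, g p ∂(μseq n)) atTop (𝓝 (∫ p, g p ∂μ)))
    (hgap : ∀ ε : ℝ, 0 < ε → ∃ N : ℕ, ∀ n ≥ N, ∀ B : Set X, MeasurableSet B →
      |((μseq n) (B ×ˢ Set.univ)).toReal - (∫⁻ p, T p B ∂(μseq n)).toReal| ≤ ε) :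
    ∀ B : Set X, MeasurableSet B →
      μ (B ×ˢ Set.univ) = ∫⁻ p, T p B ∂μ := by
  intro B hB
  -- the two test functions
  set g1 : X × A → ℝ := fun p => Set.indicator B (1 : X → ℝ) p.1 with hg1def
  set g2 : X × A → ℝ := fun p => (T p B).toReal with hg2def
  have hmeasTB : Measurable fun p : X × A => T p B := T.measurable_coe hB
  have hg2meas : Measurable g2 := hmeasTB.ennreal_toReal
  have hTB_le : ∀ p : X × A, T p B ≤ 1 := fun p => by
    simpa using measure_mono (Set.subset_univ B) (μ := T p)
  -- integrals of g1
  have hint1 : ∀ ν : Measure (X × A), IsProbabilityMeasure ν →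
      ∫ p, g1 p ∂ν = (ν (B ×ˢ Set.univ)).toReal := by
    intro ν hν
    have : (fun p : X × A => Set.indicator B (1 : X → ℝ) p.1)
        = Set.indicator (Prod.fst ⁻¹' B) (1 : X × A → ℝ) := by
      ext p; by_cases hp : p.1 ∈ B <;>
        simp [Set.indicator, hp]
    rw [hg1def, this, integral_indicator_one (measurable_fst hB)]
    congr 1
    congr 1
    ext p; simp [Set.mem_prod]
  -- integrals of g2
  have hint2 : ∀ ν : Measure (X × A), IsProbabilityMeasure ν →
      ∫ p, g2 p ∂ν = (∫⁻ p, T p B ∂ν).toReal := by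
    intro ν hν
    exact integral_toReal hmeasTB.aemeasurable
      (Filter.Eventually.of_forall fun p => lt_of_le_of_lt (hTB_le p) (by simp))
  -- convergence of g1 integrals
  have h1 : Tendsto (fun n => ((μseq n) (B ×ˢ Set.univ)).toReal) atTop
      (𝓝 ((μ (B ×ˢ Set.univ)).toReal)) := by
    have := hws g1 ((measurable_one.indicator hB).comp measurable_fst)
      ⟨1, fun p => by
        by_cases hp : p.1 ∈ B <;> simp [hg1def, Set.indicator, hp]⟩
      (fun x => by
        by_cases hx : x ∈ B <;> simp [hg1def, Set.indicator, hx, continuous_const])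
    rwa [hint1 μ inferInstance, funext (fun n => hint1 (μseq n) (hμseq n))] at this
  -- convergence of g2 integrals
  have h2 : Tendsto (fun n => (∫⁻ p, T p B ∂(μseq n)).toReal) atTop
      (𝓝 ((∫⁻ p, T p B ∂μ).toReal)) := by
    have hcont : ∀ x : X, Continuous fun u : A => g2 (x, u) := by
      intro x
      have := hT (Set.indicator B (1 : X → ℝ))
        (measurable_one.indicator hB)
        ⟨1, fun y => by by_cases hy : y ∈ B <;> simp [Set.indicator, hy]⟩ x
      have heq : (fun u : A => ∫ y, Set.indicator B (1 : X → ℝ) y ∂(T (x, u)))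
          = fun u : A => g2 (x, u) := by
        funext u
        rw [hg2def, integral_indicator_one hB]; rfl
      rwa [heq] at this
    have := hws g2 hg2meas
      ⟨1, fun p => by
        rw [abs_of_nonneg ENNReal.toReal_nonneg]
        exact ENNReal.toReal_le_of_le_ofReal one_pos.le (by simpa using hTB_le p)⟩
      hcont
    rwa [hint2 μ inferInstance, funext (fun n => hint2 (μseq n) (hμseq n))] at this
  -- the gap tends to zero
  have hgap0 : Tendsto (fun n => ((μseq n) (B ×ˢ Set.univ)).toReal
      - (∫⁻ p, T p B ∂(μseq n)).toReal) atTop (𝓝 0) := by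
    rw [Metric.tendsto_atTop]
    intro ε hε
    obtain ⟨N, hN⟩ := hgap (ε / 2) (half_pos hε)
    exact ⟨N, fun n hn => by
      have := hN n hn B hB
      rw [Real.dist_eq, sub_zero]
      linarith [half_lt_self hε]⟩
  have hkey : (μ (B ×ˢ Set.univ)).toReal = (∫⁻ p, T p B ∂μ).toReal := by
    have := h1.sub h2
    have h0 := tendsto_nhds_unique hgap0 this
    linarith
  have hlt1 : μ (B ×ˢ Set.univ) ≠ ⊤ := measure_ne_top _ _
  have hlt2 : ∫⁻ p, T p B ∂μ ≠ ⊤ := by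
    refine ne_top_of_le_ne_top (by simp : (1 : ℝ≥0∞) ≠ ⊤) ?_
    calc ∫⁻ p, T p B ∂μ ≤ ∫⁻ _, 1 ∂μ := lintegral_mono hTB_le
      _ = 1 := by simp
  exact (ENNReal.toReal_eq_toReal_iff' hlt1 hlt2).mp hkey
end

section
/- Suppose there is a finite measure ν on 𝕏 with 𝒯(dy|x,u) ≤ ν(dy) for all (x,u), i.e., 𝒯(A|x,u) ≤ ν(A) for all Borel A and all (x,u) ∈ 𝕏×𝔸. Then for any sequence of probability measures μ_n on 𝕏×𝔸, the sequence of state marginals of the 'one-step' measures (μ_n𝒯) defined by (μ_n𝒯)(A) = ∫ 𝒯(A|x,u)μ_n(dx,du) is setwise sequentially precompact: every subsequence has a further subsequence converging setwise to a probability measure on 𝕏. -/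
open MeasureTheory ProbabilityTheory Filter
open scoped ENNReal Topology RealInnerProductSpace

lemma diagA {H : Type*} [NormedAddCommGroup H] [InnerProductSpace ℝ H]
    (F : ℕ → H) (M : ℝ) (hM : ∀ n, ‖F n‖ ≤ M) :
    ∃ ψ : ℕ → ℕ, StrictMono ψ ∧ ∀ m : ℕ, ∃ L : ℝ,
      Tendsto (fun k => ⟪F (ψ k), F m⟫) atTop (𝓝 L) := by
  have hcomp : IsCompact (Set.univ.pi fun _ : ℕ => Set.Icc (-(M*M)) (M*M)) :=
    isCompact_univ_pi fun _ => isCompact_Icc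
  have hmem : ∀ n, (fun m => ⟪F n, F m⟫) ∈ Set.univ.pi fun _ : ℕ => Set.Icc (-(M*M)) (M*M) := by
    intro n m _
    have := abs_real_inner_le_norm (F n) (F m)
    have hb : |⟪F n, F m⟫| ≤ M * M := by
      refine this.trans (mul_le_mul (hM n) (hM m) (norm_nonneg _) ?_)
      exact (norm_nonneg _).trans (hM n)
    constructor
    · linarith [(abs_le.mp hb).1]
    · exact (abs_le.mp hb).2
  obtain ⟨a, -, ψ, hψ, hconv⟩ := hcomp.isSeqCompact (x := fun n m => ⟪F n, F m⟫) hmem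
  refine ⟨ψ, hψ, fun m => ⟨a m, ?_⟩⟩
  exact (tendsto_pi_nhds.mp hconv) m

lemma weak_seq_compact {H : Type*} [NormedAddCommGroup H] [InnerProductSpace ℝ H]
    [CompleteSpace H] (F : ℕ → H) (M : ℝ) (hM : ∀ n, ‖F n‖ ≤ M) :
    ∃ ψ : ℕ → ℕ, StrictMono ψ ∧ ∃ g : H,
      ∀ h : H, Tendsto (fun k => ⟪F (ψ k), h⟫) atTop (𝓝 ⟪g, h⟫) := by
  obtain ⟨ψ, hψ, hdiag⟩ := diagA F M hM
  have hMnn : 0 ≤ M := (norm_nonneg _).trans (hM 0)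
  set K : Submodule ℝ H := (Submodule.span ℝ (Set.range F)).topologicalClosure with hK
  haveI : CompleteSpace K := (Submodule.span ℝ (Set.range F)).isClosed_topologicalClosure.completeSpace_coe
  -- convergence on the span
  have hspan : ∀ y ∈ Submodule.span ℝ (Set.range F), ∃ L : ℝ,
      Tendsto (fun k => ⟪F (ψ k), y⟫) atTop (𝓝 L) := by
    intro y hy
    induction hy using Submodule.span_induction with
    | mem x hx =>
      obtain ⟨m, rfl⟩ := hx
      exact hdiag m
    | zero => exact ⟨0, by simpa using tendsto_const_nhds⟩
    | add x y _ _ hx hy =>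
      obtain ⟨Lx, hLx⟩ := hx; obtain ⟨Ly, hLy⟩ := hy
      exact ⟨Lx + Ly, by simpa [inner_add_right] using hLx.add hLy⟩
    | smul c x _ hx =>
      obtain ⟨Lx, hLx⟩ := hx
      exact ⟨c * Lx, by simpa [inner_smul_right] using hLx.const_mul c⟩
  -- convergence for every h (Cauchy argument)
  have hall : ∀ h : H, ∃ L : ℝ, Tendsto (fun k => ⟪F (ψ k), h⟫) atTop (𝓝 L) := by
    intro h
    obtain ⟨y, hyK, z, hz, rfl⟩ := K.exists_add_mem_mem_orthogonal h
    have hFz : ∀ n, ⟪F n, z⟫ = 0 := by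
      intro n
      have hFK : F n ∈ K := Submodule.le_topologicalClosure _ (Submodule.subset_span ⟨n, rfl⟩)
      exact ((Submodule.mem_orthogonal K z).mp hz) (F n) hFK
    simp only [inner_add_right, hFz, add_zero]
    -- suffices: converges for y ∈ K
    have hcauchy : CauchySeq (fun k => ⟪F (ψ k), y⟫) := by
      rw [Metric.cauchySeq_iff]
      intro ε hε
      obtain ⟨y', hy'span, hy'close⟩ : ∃ y' ∈ Submodule.span ℝ (Set.range F),
          ‖y - y'‖ < ε / (3 * (M + 1)) := by
        have : y ∈ closure ((Submodule.span ℝ (Set.range F)) : Set H) := by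
          have hy2 := hyK
          rw [← SetLike.mem_coe, Submodule.topologicalClosure_coe] at hy2
          exact hy2
        obtain ⟨y', hy'mem, hy'd⟩ := Metric.mem_closure_iff.mp this (ε / (3 * (M + 1)))
          (by positivity)
        exact ⟨y', hy'mem, by rwa [← dist_eq_norm]⟩
      obtain ⟨L, hL⟩ := hspan y' hy'span
      have hLc : CauchySeq (fun k => ⟪F (ψ k), y'⟫) := hL.cauchySeq
      rw [Metric.cauchySeq_iff] at hLc
      obtain ⟨N, hN⟩ := hLc (ε / 3) (by positivity)
      refine ⟨N, fun m hm n hn => ?_⟩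
      have hbnd : ∀ j, |⟪F (ψ j), y - y'⟫| ≤ ε / 3 := by
        intro j
        calc |⟪F (ψ j), y - y'⟫| ≤ ‖F (ψ j)‖ * ‖y - y'‖ := abs_real_inner_le_norm _ _
          _ ≤ M * (ε / (3 * (M + 1))) := by
              apply mul_le_mul (hM _) hy'close.le (norm_nonneg _) hMnn
          _ = ε / 3 * (M / (M + 1)) := by field_simp
          _ ≤ ε / 3 := by
              apply mul_le_of_le_one_right (by positivity)
              exact div_le_one_of_le₀ (by linarith) (by linarith)
      have key : ∀ j, dist ⟪F (ψ j), y⟫ ⟪F (ψ j), y'⟫ ≤ ε / 3 := by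
        intro j
        rw [Real.dist_eq, ← inner_sub_right]
        exact hbnd j
      calc dist ⟪F (ψ m), y⟫ ⟪F (ψ n), y⟫
          ≤ dist ⟪F (ψ m), y⟫ ⟪F (ψ m), y'⟫ + dist ⟪F (ψ m), y'⟫ ⟪F (ψ n), y'⟫
            + dist ⟪F (ψ n), y'⟫ ⟪F (ψ n), y⟫ := dist_triangle4 _ _ _ _
        _ < ε / 3 + ε / 3 + ε / 3 := by
            have := hN m hm n hn
            have h1 := key m
            have h2 := key n
            rw [dist_comm] at h2
            apply add_lt_add_of_lt_of_le (add_lt_add_of_le_of_lt h1 this) h2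
        _ = ε := by ring
    obtain ⟨L, hL⟩ := cauchySeq_tendsto_of_complete hcauchy
    exact ⟨L, hL⟩
  -- build the functional
  choose Lim hLim using hall
  have hadd : ∀ a b : H, Lim (a + b) = Lim a + Lim b := by
    intro a b
    have : Tendsto (fun k => ⟪F (ψ k), a + b⟫) atTop (𝓝 (Lim a + Lim b)) := by
      simpa [inner_add_right] using (hLim a).add (hLim b)
    exact tendsto_nhds_unique (hLim _) this
  have hsmul : ∀ (c : ℝ) (a : H), Lim (c • a) = c * Lim a := by
    intro c a
    have : Tendsto (fun k => ⟪F (ψ k), c • a⟫) atTop (𝓝 (c * Lim a)) := by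
      simpa [inner_smul_right] using (hLim a).const_mul c
    exact tendsto_nhds_unique (hLim _) this
  have hbound : ∀ a : H, |Lim a| ≤ M * ‖a‖ := by
    intro a
    have h1 : Tendsto (fun k => |⟪F (ψ k), a⟫|) atTop (𝓝 |Lim a|) := (hLim a).abs
    refine le_of_tendsto h1 (Eventually.of_forall fun k => ?_)
    exact (abs_real_inner_le_norm _ _).trans
      (mul_le_mul_of_nonneg_right (hM _) (norm_nonneg _))
  let Λ : H →L[ℝ] ℝ := LinearMap.mkContinuous
    { toFun := Lim, map_add' := hadd, map_smul' := hsmul } M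
    (fun a => by simpa using hbound a)
  refine ⟨ψ, hψ, (InnerProductSpace.toDual ℝ H).symm Λ, fun h => ?_⟩
  rw [InnerProductSpace.toDual_symm_apply]
  exact hLim h

/-- If the transition kernel is majorized by a finite measure `ν`, then the
one-step state measures `μₙ𝒯` of any sequence of probability measures are
setwise sequentially precompact. -/
theorem stmt9 {X A : Type*} [MeasurableSpace X] [MeasurableSpace A]
    (T : Kernel (X × A) X) [IsMarkovKernel T]
    (ν : Measure X) [IsFiniteMeasure ν]
    (hmaj : ∀ p : X × A, ∀ B : Set X, MeasurableSet B → T p B ≤ ν B)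
    (μseq : ℕ → Measure (X × A)) (hμseq : ∀ n, IsProbabilityMeasure (μseq n)) :
    ∀ φ : ℕ → ℕ, StrictMono φ →
      ∃ ψ : ℕ → ℕ, StrictMono ψ ∧ ∃ π : Measure X, IsProbabilityMeasure π ∧
        ∀ B : Set X, MeasurableSet B →
          Tendsto (fun k => ((μseq (φ (ψ k))).bind T) B) atTop (𝓝 (π B)) := by
  intro φ hφ
  set μ : ℕ → Measure X := fun n => (μseq (φ n)).bind T with hμdef
  have hbind : ∀ n (B : Set X), MeasurableSet B → μ n B = ∫⁻ p, T p B ∂(μseq (φ n)) := by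
    intro n B hB
    exact Measure.bind_apply hB (Kernel.measurable T).aemeasurable
  have hprob : ∀ n, IsProbabilityMeasure (μ n) := by
    intro n
    haveI := hμseq (φ n)
    constructor
    rw [hbind n Set.univ MeasurableSet.univ]
    simp
  have hle : ∀ n (B : Set X), MeasurableSet B → μ n B ≤ ν B := by
    intro n B hB
    haveI := hμseq (φ n)
    rw [hbind n B hB]
    calc ∫⁻ p, T p B ∂(μseq (φ n)) ≤ ∫⁻ _, ν B ∂(μseq (φ n)) :=
          lintegral_mono fun p => hmaj p B hB
      _ = ν B := by simp
  have hlem : ∀ n, μ n ≤ ν := fun n => Measure.le_intro fun B hB _ => hle n B hB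
  have hac : ∀ n, μ n ≪ ν := fun n => (hlem n).absolutelyContinuous
  -- densities
  set f : ℕ → X → ℝ := fun n x => ((μ n).rnDeriv ν x).toReal with hfdef
  have hf_meas : ∀ n, Measurable (f n) := fun n =>
    (Measure.measurable_rnDeriv _ _).ennreal_toReal
  have hf_bd : ∀ n, ∀ᵐ x ∂ν, ‖f n x‖ ≤ 1 := by
    intro n
    filter_upwards [Measure.rnDeriv_le_one_of_le (hlem n)] with x hx
    rw [Real.norm_eq_abs, abs_of_nonneg ENNReal.toReal_nonneg]
    exact ENNReal.toReal_le_of_le_ofReal one_pos.le (by simpa using hx)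
  have hmem : ∀ n, MemLp (f n) 2 ν := fun n =>
    MemLp.of_bound (hf_meas n).aestronglyMeasurable 1 (hf_bd n)
  set F : ℕ → Lp ℝ 2 ν := fun n => (hmem n).toLp (f n) with hFdef
  set M : ℝ := (measureUnivNNReal ν : ℝ) ^ (2 : ℝ≥0∞).toReal⁻¹ * 1 with hMdef
  have hM : ∀ n, ‖F n‖ ≤ M := by
    intro n
    apply Lp.norm_le_of_ae_bound zero_le_one
    filter_upwards [(hmem n).coeFn_toLp, hf_bd n] with x hx hb
    rw [hx]; exact hb
  -- key: inner with indicator = measure value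
  have hinner : ∀ n (B : Set X) (hB : MeasurableSet B),
      ⟪F n, indicatorConstLp 2 hB (measure_ne_top ν B) (1 : ℝ)⟫ = ((μ n) B).toReal := by
    intro n B hB
    rw [real_inner_comm, L2.inner_indicatorConstLp_eq_setIntegral_inner]
    have : ∫ x in B, ⟪(1 : ℝ), (F n : X → ℝ) x⟫ ∂ν = ∫ x in B, f n x ∂ν := by
      apply setIntegral_congr_ae hB
      filter_upwards [(hmem n).coeFn_toLp] with x hx _
      rw [hx]; simp [RCLike.inner_apply]
    rw [this, Measure.setIntegral_toReal_rnDeriv (hac n) B]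
    rfl
  obtain ⟨ψ, hψ, g, hg⟩ := weak_seq_compact F M hM
  -- integrals of g
  have hg_int : Integrable (g : X → ℝ) ν := (Lp.memLp g).integrable one_le_two
  have hginner : ∀ (B : Set X) (hB : MeasurableSet B),
      ⟪g, indicatorConstLp 2 hB (measure_ne_top ν B) (1 : ℝ)⟫ = ∫ x in B, g x ∂ν := by
    intro B hB
    rw [real_inner_comm, L2.inner_indicatorConstLp_eq_setIntegral_inner]
    apply setIntegral_congr_ae hB
    filter_upwards with x _
    simp [RCLike.inner_apply]
  have hlim : ∀ (B : Set X) (hB : MeasurableSet B),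
      Tendsto (fun k => ((μ (ψ k)) B).toReal) atTop (𝓝 (∫ x in B, g x ∂ν)) := by
    intro B hB
    have := hg (indicatorConstLp 2 hB (measure_ne_top ν B) (1 : ℝ))
    rw [hginner B hB] at this
    simpa only [hinner] using this
  -- g is a.e. nonneg
  have hg_nonneg : 0 ≤ᵐ[ν] (g : X → ℝ) := by
    apply ae_nonneg_of_forall_setIntegral_nonneg hg_int
    intro s hs _
    refine ge_of_tendsto (hlim s hs) (Eventually.of_forall fun k => ENNReal.toReal_nonneg)
  set π : Measure X := ν.withDensity (fun x => ENNReal.ofReal ((g : X → ℝ) x)) with hπdef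
  have hπB : ∀ (B : Set X), MeasurableSet B → π B = ENNReal.ofReal (∫ x in B, g x ∂ν) := by
    intro B hB
    rw [hπdef, withDensity_apply _ hB,
      ← ofReal_integral_eq_lintegral_ofReal hg_int.integrableOn
        (ae_restrict_of_ae hg_nonneg)]
  have hπprob : IsProbabilityMeasure π := by
    constructor
    rw [hπB Set.univ MeasurableSet.univ]
    have huniv : Tendsto (fun k => ((μ (ψ k)) Set.univ).toReal) atTop
        (𝓝 (∫ x in Set.univ, g x ∂ν)) := hlim Set.univ MeasurableSet.univ
    have hone : ∀ k, ((μ (ψ k)) Set.univ).toReal = 1 := by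
      intro k; haveI := hprob (ψ k); simp
    simp only [hone] at huniv
    have : ∫ x in Set.univ, (g : X → ℝ) x ∂ν = 1 :=
      tendsto_nhds_unique huniv tendsto_const_nhds
    rw [this]; simp
  refine ⟨ψ, hψ, π, hπprob, fun B hB => ?_⟩
  have h1 : ∀ k, μ (ψ k) B = ENNReal.ofReal (((μ (ψ k)) B).toReal) := by
    intro k
    rw [ENNReal.ofReal_toReal]
    exact ((hle (ψ k) B hB).trans_lt (measure_lt_top ν B)).ne
  rw [hπB B hB]
  show Tendsto (fun k => μ (ψ k) B) atTop _
  refine Tendsto.congr (fun k => (h1 k).symm) ?_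
  exact (ENNReal.continuous_ofReal.tendsto _).comp (hlim B hB)
end

section
/- Suppose 𝒯(D|x,u) ≥ ∫_D f(x,u,y) φ(dy) for all Borel D, where f : 𝕏×𝔸×𝕏 → [0,∞) is measurable, continuous in (x,u) for every fixed y, 𝔸 is compact, and ∫ inf_{x∈A, u∈𝔸} f(x,u,y) φ(dy) > 0 for every nonempty compact A ⊆ 𝕏. Then every nonempty compact set A ⊆ 𝕏 is 1-small uniformly over all stationary policies: there is a nontrivial positive measure ν_A on 𝕏 such that for every stationary policy γ, 𝒯^γ(D|x) = ∫γ(du|x)𝒯(D|x,u) ≥ ν_A(D) for all x ∈ A and Borel D. -/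
open MeasureTheory ProbabilityTheory
open scoped ENNReal

/-- Under a minorization by a density `f` that is continuous in `(x,u)`, with
compact action space and positive infima over compact state sets, every
nonempty compact set is `1`-small uniformly over all stationary policies. -/
theorem stmt16 {X A : Type*}
    [TopologicalSpace X] [MeasurableSpace X] [OpensMeasurableSpace X]
    [TopologicalSpace A] [MeasurableSpace A] [OpensMeasurableSpace A]
    [CompactSpace A]
    (T : Kernel (X × A) X) [IsMarkovKernel T]
    (φ : Measure X)
    (f : X → A → X → ℝ) (hf0 : ∀ x u y, 0 ≤ f x u y)
    (hfm : Measurable fun q : (X × A) × X => f q.1.1 q.1.2 q.2)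
    (hfc : ∀ y : X, Continuous fun p : X × A => f p.1 p.2 y)
    (hminor : ∀ (x : X) (u : A), ∀ D : Set X, MeasurableSet D →
      ∫⁻ y in D, ENNReal.ofReal (f x u y) ∂φ ≤ T (x, u) D)
    (hpos : ∀ C : Set X, IsCompact C → C.Nonempty →
      0 < ∫⁻ y, ⨅ (x : X) (_ : x ∈ C), ⨅ u : A, ENNReal.ofReal (f x u y) ∂φ) :
    ∀ C : Set X, IsCompact C → C.Nonempty →
      ∃ ν : Measure X, ν ≠ 0 ∧
        ∀ γ : Kernel X A, IsMarkovKernel γ →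
          ∀ x ∈ C, ∀ D : Set X, MeasurableSet D →
            ν D ≤ ∫⁻ u, T (x, u) D ∂(γ x) := by
  intro C hC hCne
  set g : X → ℝ≥0∞ := fun y => ⨅ (x : X) (_ : x ∈ C), ⨅ u : A, ENNReal.ofReal (f x u y) with hg
  refine ⟨φ.withDensity g, ?_, ?_⟩
  · intro h
    have h0 := hpos C hC hCne
    have : (φ.withDensity g) Set.univ = ∫⁻ y, g y ∂φ := by
      rw [withDensity_apply _ MeasurableSet.univ, setLIntegral_univ]
    rw [h] at this
    simp only [Measure.coe_zero, Pi.zero_apply] at this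
    exact absurd this.symm (ne_of_gt h0)
  · intro γ hγ x hx D hD
    have hAne : Nonempty A := by
      by_contra hA
      have : (γ x) Set.univ = 1 := measure_univ
      rw [Set.univ_eq_empty_iff.mpr (not_nonempty_iff.mp hA)] at this
      simp at this
    obtain ⟨u₀⟩ := hAne
    have key : ∀ u : A, (φ.withDensity g) D ≤ T (x, u) D := by
      intro u
      rw [withDensity_apply _ hD]
      refine le_trans ?_ (hminor x u D hD)
      refine setLIntegral_mono' hD fun y _ => ?_
      calc g y ≤ ⨅ u : A, ENNReal.ofReal (f x u y) := by
              exact iInf_le_of_le x (iInf_le _ hx)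
        _ ≤ ENNReal.ofReal (f x u y) := iInf_le _ u
    calc (φ.withDensity g) D = ∫⁻ _, (φ.withDensity g) D ∂(γ x) := by
          rw [lintegral_const, measure_univ, mul_one]
      _ ≤ ∫⁻ u, T (x, u) D ∂(γ x) := lintegral_mono fun u => key u
end
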